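/- arXiv:2307.03820 — 2 statements merged into one kernel-verified Lean document; each statement's English description precedes it below -/
import Mathlib

section
/- Let f be C⁴ on a neighbourhood of x₀ and fix u, w ∈ E. Then the six-point one-sided stencil for the mixed second derivative in the first-order direction ε•u and the second-order direction ε²•w is fifth-order accurate: the function ε ↦ ( −3•f(x₀ + ε²•w) + 4•f(x₀ + (ε/2)•u + ε²•w) − f(x₀ + ε•u + ε²•w) ) − ( −3•f(x₀) + 4•f(x₀ + (ε/2)•u) − f(x₀ + ε•u) ) − ε³ • f″(x₀)[u,w] is O(ε⁵) as ε → 0. -/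
set_option maxSynthPendingDepth 3
set_option maxHeartbeats 1000000

open Topology Asymptotics Set

section curves
variable {G : Type*} [NormedAddCommGroup G] [NormedSpace ℝ G]

/-- Order-2 Taylor bound on `[0,1]` with explicit derivative functions. -/
lemma taylor2_01 {f₀ f₁ f₂ f₃ : ℝ → G} {M : ℝ}
    (h₀ : ∀ t ∈ Icc (0:ℝ) 1, HasDerivWithinAt f₀ (f₁ t) (Icc (0:ℝ) 1) t)
    (h₁ : ∀ t ∈ Icc (0:ℝ) 1, HasDerivWithinAt f₁ (f₂ t) (Icc (0:ℝ) 1) t)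
    (h₂ : ∀ t ∈ Icc (0:ℝ) 1, HasDerivWithinAt f₂ (f₃ t) (Icc (0:ℝ) 1) t)
    (hM : ∀ t ∈ Icc (0:ℝ) 1, ‖f₃ t‖ ≤ M) :
    ‖f₀ 1 - f₀ 0 - f₁ 0 - (2⁻¹ : ℝ) • f₂ 0‖ ≤ M := by
  have hM0 : 0 ≤ M := le_trans (norm_nonneg _) (hM 0 (by norm_num))
  have stepA : ∀ t ∈ Icc (0:ℝ) 1, ‖f₂ t - f₂ 0‖ ≤ M * t := by
    intro t ht
    simpa using norm_image_sub_le_of_norm_deriv_le_segment' h₂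
      (fun s hs => hM s (Ico_subset_Icc_self hs)) t ht
  have stepB : ∀ t ∈ Icc (0:ℝ) 1, ‖f₁ t - f₁ 0 - t • f₂ 0‖ ≤ M * t := by
    have hg : ∀ t ∈ Icc (0:ℝ) 1,
        HasDerivWithinAt (fun s => f₁ s - s • f₂ 0) (f₂ t - f₂ 0) (Icc (0:ℝ) 1) t := by
      intro t ht
      have h' : HasDerivWithinAt (fun s : ℝ => s • f₂ 0) ((1:ℝ) • f₂ 0) (Icc (0:ℝ) 1) t :=
        (hasDerivWithinAt_id t _).smul_const (f₂ 0)
      have := (h₁ t ht).sub h'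
      rw [one_smul] at this
      exact this
    have hbound : ∀ t ∈ Ico (0:ℝ) 1, ‖f₂ t - f₂ 0‖ ≤ M := by
      intro t ht
      refine (stepA t (Ico_subset_Icc_self ht)).trans ?_
      nlinarith [ht.1, ht.2]
    intro t ht
    have := norm_image_sub_le_of_norm_deriv_le_segment' hg hbound t ht
    simpa [sub_right_comm] using this
  have hg0 : ∀ t ∈ Icc (0:ℝ) 1,
      HasDerivWithinAt (fun s => f₀ s - s • f₁ 0 - (s^2/2) • f₂ 0)
        (f₁ t - f₁ 0 - t • f₂ 0) (Icc (0:ℝ) 1) t := by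
    intro t ht
    have h1 : HasDerivWithinAt (fun s : ℝ => s • f₁ 0) ((1:ℝ) • f₁ 0) (Icc (0:ℝ) 1) t :=
      (hasDerivWithinAt_id t _).smul_const (f₁ 0)
    have h2 : HasDerivWithinAt (fun s : ℝ => (s^2/2) • f₂ 0) (t • f₂ 0) (Icc (0:ℝ) 1) t := by
      have : HasDerivWithinAt (fun s : ℝ => s^2/2) (t : ℝ) (Icc (0:ℝ) 1) t := by
        simpa using ((hasDerivWithinAt_id t (Icc (0:ℝ) 1)).pow 2).div_const 2
      exact this.smul_const (f₂ 0)
    have := ((h₀ t ht).sub h1).sub h2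
    rw [one_smul] at this
    exact this
  have hbound0 : ∀ t ∈ Ico (0:ℝ) 1, ‖f₁ t - f₁ 0 - t • f₂ 0‖ ≤ M := by
    intro t ht
    refine (stepB t (Ico_subset_Icc_self ht)).trans ?_
    nlinarith [ht.1, ht.2]
  have := norm_image_sub_le_of_norm_deriv_le_segment' hg0 hbound0 1 (by norm_num)
  norm_num at this
  rw [show f₀ 1 - f₀ 0 - f₁ 0 - (2⁻¹ : ℝ) • f₂ 0
      = f₀ 1 - f₁ 0 - (2⁻¹ : ℝ) • f₂ 0 - f₀ 0 by abel]
  simpa [one_div] using this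

end curves

section banach
variable {E : Type*} [NormedAddCommGroup E] [NormedSpace ℝ E]
variable {G : Type*} [NormedAddCommGroup G] [NormedSpace ℝ G]

lemma key0 {h : E → G} {h1 : E → E →L[ℝ] G} {s : Set E} {M : ℝ} (hs : Convex ℝ s)
    (hd0 : ∀ z ∈ s, HasFDerivAt h (h1 z) z)
    (hM : ∀ z ∈ s, ‖h1 z‖ ≤ M) {x y : E} (hx : x ∈ s) (hy : y ∈ s) :
    ‖h y - h x‖ ≤ M * ‖y - x‖ :=
  hs.norm_image_sub_le_of_norm_hasFDerivWithin_le
    (fun z hz => (hd0 z hz).hasFDerivWithinAt) hM hx hy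

/-- Quantitative second-order Taylor bound along a segment in a Banach space. -/
lemma key2 {h : E → G} {h1 : E → E →L[ℝ] G} {h2 : E → E →L[ℝ] E →L[ℝ] G}
    {h3 : E → E →L[ℝ] E →L[ℝ] E →L[ℝ] G} {s : Set E} {M : ℝ} (hs : Convex ℝ s)
    (hd0 : ∀ z ∈ s, HasFDerivAt h (h1 z) z)
    (hd1 : ∀ z ∈ s, HasFDerivAt h1 (h2 z) z)
    (hd2 : ∀ z ∈ s, HasFDerivAt h2 (h3 z) z)
    (hM : ∀ z ∈ s, ‖h3 z‖ ≤ M) {x y : E} (hx : x ∈ s) (hy : y ∈ s) :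
    ‖h y - h x - h1 x (y - x) - (2⁻¹ : ℝ) • h2 x (y - x) (y - x)‖ ≤ M * ‖y - x‖ ^ 3 := by
  set v := y - x with hv
  set c : ℝ → E := fun t => x + t • v with hc
  have hmem : ∀ t ∈ Icc (0:ℝ) 1, c t ∈ s := fun t ht => hs.add_smul_sub_mem hx hy ht
  have hcd : ∀ t : ℝ, HasDerivWithinAt c v (Icc (0:ℝ) 1) t := by
    intro t
    simpa only [one_smul, id] using ((hasDerivWithinAt_id t (Icc (0:ℝ) 1)).smul_const v).const_add x
  have hf0 : ∀ t ∈ Icc (0:ℝ) 1,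
      HasDerivWithinAt (fun t => h (c t)) (h1 (c t) v) (Icc (0:ℝ) 1) t := fun t ht =>
    (hd0 _ (hmem t ht)).comp_hasDerivWithinAt t (hcd t)
  have hf1 : ∀ t ∈ Icc (0:ℝ) 1,
      HasDerivWithinAt (fun t => h1 (c t) v) (h2 (c t) v v) (Icc (0:ℝ) 1) t := by
    intro t ht
    have hA : HasDerivWithinAt (fun t => h1 (c t)) (h2 (c t) v) (Icc (0:ℝ) 1) t :=
      (hd1 _ (hmem t ht)).comp_hasDerivWithinAt t (hcd t)
    simpa using hA.clm_apply (hasDerivWithinAt_const t _ v)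
  have hf2 : ∀ t ∈ Icc (0:ℝ) 1,
      HasDerivWithinAt (fun t => h2 (c t) v v) (h3 (c t) v v v) (Icc (0:ℝ) 1) t := by
    intro t ht
    have hA : HasDerivWithinAt (fun t => h2 (c t)) (h3 (c t) v) (Icc (0:ℝ) 1) t :=
      (hd2 _ (hmem t ht)).comp_hasDerivWithinAt t (hcd t)
    have hB : HasDerivWithinAt (fun t => h2 (c t) v) (h3 (c t) v v) (Icc (0:ℝ) 1) t := by
      simpa using hA.clm_apply (hasDerivWithinAt_const t _ v)
    simpa using hB.clm_apply (hasDerivWithinAt_const t _ v)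
  have hbound : ∀ t ∈ Icc (0:ℝ) 1, ‖h3 (c t) v v v‖ ≤ M * ‖v‖ ^ 3 := by
    intro t ht
    have b1 : ‖h3 (c t) v v v‖ ≤ ‖h3 (c t) v v‖ * ‖v‖ := ContinuousLinearMap.le_opNorm _ v
    have b3 : ‖h3 (c t) v‖ ≤ ‖h3 (c t)‖ * ‖v‖ := ContinuousLinearMap.le_opNorm _ v
    have b4 : ‖h3 (c t)‖ ≤ M := hM _ (hmem t ht)
    calc ‖h3 (c t) v v v‖ ≤ ‖h3 (c t) v v‖ * ‖v‖ := b1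
      _ ≤ (‖h3 (c t) v‖ * ‖v‖) * ‖v‖ := by
          gcongr
          exact ContinuousLinearMap.le_opNorm _ v
      _ ≤ ((‖h3 (c t)‖ * ‖v‖) * ‖v‖) * ‖v‖ := by gcongr
      _ ≤ ((M * ‖v‖) * ‖v‖) * ‖v‖ := by gcongr
      _ = M * ‖v‖ ^ 3 := by ring
  have := taylor2_01 hf0 hf1 hf2 hbound
  have hy' : c 1 = y := by simp [hc, hv]
  have hx' : c 0 = x := by simp [hc]
  simpa [hy', hx'] using this

end banach

section assembly
variable {F : Type*} [NormedAddCommGroup F] [NormedSpace ℝ F]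

lemma stencil_assembly (ε M nu nw : ℝ)
    (y0 y1 y2 z0 z1 z2 a0 a1 a2 b0 b1 b2 g d R0 R1 R2 T1w T2w D1ww D2ww : F)
    (hy0 : y0 - z0 = ε^2 • a0 + (2⁻¹*ε^4) • b0 + R0)
    (hy1 : y1 - z1 = ε^2 • a1 + (2⁻¹*ε^4) • b1 + R1)
    (hy2 : y2 - z2 = ε^2 • a2 + (2⁻¹*ε^4) • b2 + R2)
    (ha1 : a1 = a0 + (ε/2) • g + (2⁻¹*(ε/2)^2) • d + T1w)
    (ha2 : a2 = a0 + ε • g + (2⁻¹*ε^2) • d + T2w)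
    (hb1 : b1 = b0 + D1ww)
    (hb2 : b2 = b0 + D2ww)
    (hM : 0 ≤ M) (hnu : 0 ≤ nu) (hnw : 0 ≤ nw)
    (ht1 : (abs ε) ≤ 1)
    (hR0 : ‖R0‖ ≤ M * ((abs ε)^2*nw)^3) (hR1 : ‖R1‖ ≤ M * ((abs ε)^2*nw)^3)
    (hR2 : ‖R2‖ ≤ M * ((abs ε)^2*nw)^3)
    (hT1 : ‖T1w‖ ≤ M * (((abs ε)/2)*nu)^3 * nw) (hT2 : ‖T2w‖ ≤ M * ((abs ε)*nu)^3 * nw)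
    (hD1 : ‖D1ww‖ ≤ M * (((abs ε)/2)*nu) * nw^2) (hD2 : ‖D2ww‖ ≤ M * ((abs ε)*nu) * nw^2) :
    ‖(-(3:ℝ) • y0 + (4:ℝ) • y1 - y2) - (-(3:ℝ) • z0 + (4:ℝ) • z1 - z2) - ε^3 • g‖
      ≤ (8*M*nw^3 + (3/2)*M*nu^3*nw + (3/2)*M*nu*nw^2) * (abs ε)^5 := by
  subst ha1 ha2 hb1 hb2
  have key : (-(3:ℝ) • y0 + (4:ℝ) • y1 - y2) - (-(3:ℝ) • z0 + (4:ℝ) • z1 - z2) - ε^3 • g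
      = ((-(3:ℝ)) • R0 + (4:ℝ) • R1 - R2) + ((4*ε^2) • T1w - ε^2 • T2w)
        + ((2*ε^4) • D1ww - (2⁻¹*ε^4) • D2ww) := by
    have e0 : y0 = (ε^2 • a0 + (2⁻¹*ε^4) • b0 + R0) + z0 := by
      rw [← hy0]; abel
    have e1 : y1 = (ε^2 • (a0 + (ε/2) • g + (2⁻¹*(ε/2)^2) • d + T1w)
        + (2⁻¹*ε^4) • (b0 + D1ww) + R1) + z1 := by rw [← hy1]; abel
    have e2 : y2 = (ε^2 • (a0 + ε • g + (2⁻¹*ε^2) • d + T2w)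
        + (2⁻¹*ε^4) • (b0 + D2ww) + R2) + z2 := by rw [← hy2]; abel
    subst e0 e1 e2
    module
  rw [key]
  set t := (abs ε) with htdef
  have ht0 : 0 ≤ t := abs_nonneg ε
  have habs2 : (abs (ε^2)) = t^2 := by rw [htdef, ← abs_pow]
  have habs4 : (abs (ε^4)) = t^4 := by rw [htdef, ← abs_pow]
  have n1 : ‖(-(3:ℝ)) • R0 + (4:ℝ) • R1 - R2‖ ≤ 3*‖R0‖ + 4*‖R1‖ + ‖R2‖ := by
    refine le_trans (norm_sub_le _ _) ?_
    have := norm_add_le ((-(3:ℝ)) • R0) ((4:ℝ) • R1)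
    rw [norm_smul, norm_smul] at this
    simp only [Real.norm_eq_abs] at this
    rw [show |(-3 : ℝ)| = 3 by norm_num, show |(4:ℝ)| = 4 by norm_num] at this
    linarith
  have n2 : ‖(4*ε^2) • T1w - ε^2 • T2w‖ ≤ 4*t^2*‖T1w‖ + t^2*‖T2w‖ := by
    refine le_trans (norm_sub_le _ _) ?_
    rw [norm_smul, norm_smul]
    simp only [Real.norm_eq_abs, abs_mul, habs2]
    norm_num
  have n3 : ‖(2*ε^4) • D1ww - (2⁻¹*ε^4) • D2ww‖ ≤ 2*t^4*‖D1ww‖ + 2⁻¹*t^4*‖D2ww‖ := by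
    refine le_trans (norm_sub_le _ _) ?_
    rw [norm_smul, norm_smul]
    have c1 : ‖(2*ε^4 : ℝ)‖ = 2*t^4 := by
      rw [Real.norm_eq_abs, abs_mul, habs4, abs_two]
    have c2 : ‖(2⁻¹*ε^4 : ℝ)‖ = 2⁻¹*t^4 := by
      rw [Real.norm_eq_abs, abs_mul, habs4, abs_inv, abs_two]
    rw [c1, c2]
  have total := le_trans (norm_add_le _ _)
    (add_le_add (le_trans (norm_add_le _ _) (add_le_add n1 n2)) n3)
  refine le_trans total ?_
  have hb1' : 3*‖R0‖ + 4*‖R1‖ + ‖R2‖ ≤ 8*M*nw^3*t^6 := by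
    have : (8:ℝ)*M*nw^3*t^6 = 3*(M*(t^2*nw)^3) + 4*(M*(t^2*nw)^3) + M*(t^2*nw)^3 := by ring
    rw [this]
    gcongr <;> assumption
  have hb2' : 4*t^2*‖T1w‖ + t^2*‖T2w‖ ≤ (3/2)*M*nu^3*nw*t^5 := by
    have h1 : 4*t^2*‖T1w‖ ≤ 4*t^2*(M*((t/2)*nu)^3*nw) := by
      have := sq_nonneg t
      gcongr
    have h2 : t^2*‖T2w‖ ≤ t^2*(M*(t*nu)^3*nw) := by
      have := sq_nonneg t
      gcongr
    have e : 4*t^2*(M*((t/2)*nu)^3*nw) + t^2*(M*(t*nu)^3*nw) = (3/2)*M*nu^3*nw*t^5 := by ring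
    linarith
  have hb3' : 2*t^4*‖D1ww‖ + 2⁻¹*t^4*‖D2ww‖ ≤ (3/2)*M*nu*nw^2*t^5 := by
    have h40 : (0:ℝ) ≤ t^4 := by positivity
    have h1 : 2*t^4*‖D1ww‖ ≤ 2*t^4*(M*((t/2)*nu)*nw^2) := by gcongr
    have h2 : 2⁻¹*t^4*‖D2ww‖ ≤ 2⁻¹*t^4*(M*(t*nu)*nw^2) := by gcongr
    have e : 2*t^4*(M*((t/2)*nu)*nw^2) + 2⁻¹*t^4*(M*(t*nu)*nw^2) = (3/2)*M*nu*nw^2*t^5 := by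
      ring
    linarith
  have hpow : t^6 ≤ t^5 := pow_le_pow_of_le_one ht0 ht1 (by norm_num)
  have hb1'' : 8*M*nw^3*t^6 ≤ 8*M*nw^3*t^5 := by
    have h8 : (0:ℝ) ≤ 8*M*nw^3 := by positivity
    exact mul_le_mul_of_nonneg_left hpow h8
  nlinarith [hb1', hb2', hb3', hb1'']
end assembly

lemma mem_arith {a b t r ρ' nu nw : ℝ} (ha : |a| ≤ t) (hb : |b| ≤ t) (ht0 : 0 ≤ t)
    (htr : t < r) (hr2 : r ≤ ρ' / (2*(nu+nw+1))) (hnu : 0 ≤ nu) (hnw : 0 ≤ nw) :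
    |a| * nu + |b| * nw < ρ' := by
  have hK : (0:ℝ) < nu + nw + 1 := by linarith
  have h2 : r * (2*(nu+nw+1)) ≤ ρ' := by
    rw [← le_div_iff₀ (by positivity)]
    exact hr2
  nlinarith [abs_nonneg a, abs_nonneg b]

/-- Six-point one-sided stencil for the mixed second derivative in the
first-order direction `ε•u` and the second-order direction `ε²•w`:
`(-3f(x₀+ε²w) + 4f(x₀+(ε/2)u+ε²w) - f(x₀+εu+ε²w))
  - (-3f(x₀) + 4f(x₀+(ε/2)u) - f(x₀+εu)) = ε³ • f″(x₀)[u,w] + O(ε⁵)`. -/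
theorem mixed_second_derivative_onesided_stencil_order5
    {E F : Type*} [NormedAddCommGroup E] [NormedSpace ℝ E] [CompleteSpace E]
    [NormedAddCommGroup F] [NormedSpace ℝ F] [CompleteSpace F]
    (f : E → F) (x₀ u w : E)
    (hf : ContDiffAt ℝ 4 f x₀) :
    (fun ε : ℝ =>
        (-(3 : ℝ) • f (x₀ + ε ^ 2 • w) + (4 : ℝ) • f (x₀ + (ε / 2) • u + ε ^ 2 • w)
            - f (x₀ + ε • u + ε ^ 2 • w))
          - (-(3 : ℝ) • f x₀ + (4 : ℝ) • f (x₀ + (ε / 2) • u) - f (x₀ + ε • u))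
          - ε ^ 3 • iteratedFDeriv ℝ 2 f x₀ ![u, w])
      =O[𝓝 (0 : ℝ)] fun ε => ε ^ 5 := by
  set A : E → E →L[ℝ] F := fderiv ℝ f with hA
  set A2 : E → E →L[ℝ] E →L[ℝ] F := fderiv ℝ A with hA2
  set A3 : E → E →L[ℝ] E →L[ℝ] E →L[ℝ] F := fderiv ℝ A2 with hA3
  set A4 : E → E →L[ℝ] E →L[ℝ] E →L[ℝ] E →L[ℝ] F := fderiv ℝ A3 with hA4
  -- a ball on which f is C⁴
  obtain ⟨U, hUnhds, hfU⟩ : ∃ u ∈ 𝓝 x₀, ContDiffOn ℝ 4 f u := by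
    have h := (contDiffWithinAt_univ (𝕜 := ℝ)).2 hf
    rcases (contDiffWithinAt_iff_contDiffOn_nhds (by norm_num)).1 h with ⟨v, hv, h'⟩
    exact ⟨v, by simpa [insert_eq_self.2 (mem_univ x₀), nhdsWithin_univ] using hv, h'⟩
  obtain ⟨R, hRpos, hRU⟩ := Metric.mem_nhds_iff.1 hUnhds
  set B := Metric.ball x₀ R with hB
  have hBo : IsOpen B := Metric.isOpen_ball
  have hfB : ContDiffOn ℝ 4 f B := hfU.mono hRU
  have hx₀B : x₀ ∈ B := Metric.mem_ball_self hRpos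
  have hCA : ContDiffOn ℝ 3 A B := hfB.fderiv_of_isOpen hBo (by norm_num)
  have hCA2 : ContDiffOn ℝ 2 A2 B := hCA.fderiv_of_isOpen hBo (by norm_num)
  have hCA3 : ContDiffOn ℝ 1 A3 B := hCA2.fderiv_of_isOpen hBo (by norm_num)
  have hdf : ∀ z ∈ B, HasFDerivAt f (A z) z := fun z hz =>
    ((hfB.contDiffAt (hBo.mem_nhds hz)).differentiableAt (by norm_num)).hasFDerivAt
  have hdA : ∀ z ∈ B, HasFDerivAt A (A2 z) z := fun z hz =>
    ((hCA.contDiffAt (hBo.mem_nhds hz)).differentiableAt (by norm_num)).hasFDerivAt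
  have hdA2 : ∀ z ∈ B, HasFDerivAt A2 (A3 z) z := fun z hz =>
    ((hCA2.contDiffAt (hBo.mem_nhds hz)).differentiableAt (by norm_num)).hasFDerivAt
  have hdA3 : ∀ z ∈ B, HasFDerivAt A3 (A4 z) z := fun z hz =>
    ((hCA3.contDiffAt (hBo.mem_nhds hz)).differentiableAt (by norm_num)).hasFDerivAt
  have hcA3 : ContinuousOn A3 B := hCA3.continuousOn
  have hcA4 : ContinuousOn A4 B := hCA3.continuousOn_fderiv_of_isOpen hBo le_rfl
  set M : ℝ := max (‖A3 x₀‖ + 1) (‖A4 x₀‖ + 1) with hM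
  have hM0 : 0 ≤ M := le_trans (by positivity) (le_max_left _ _)
  -- a smaller ball with uniform bounds on A3 and A4
  have h3ev : ∀ᶠ z in 𝓝 x₀, ‖A3 z‖ < ‖A3 x₀‖ + 1 :=
    (((hcA3.continuousAt (hBo.mem_nhds hx₀B)).norm).eventually_lt_const (by linarith))
  have h4ev : ∀ᶠ z in 𝓝 x₀, ‖A4 z‖ < ‖A4 x₀‖ + 1 :=
    (by
      have h4 : ContinuousAt A4 x₀ := hcA4.continuousAt (hBo.mem_nhds hx₀B)
      have hc : ContinuousAt (fun z => ‖A4 z‖) x₀ :=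
        (continuous_norm (E := E →L[ℝ] E →L[ℝ] E →L[ℝ] E →L[ℝ] F)).continuousAt.comp h4
      exact hc.eventually_lt_const (by linarith))
  obtain ⟨ρ, hρpos, hρ⟩ := Metric.eventually_nhds_iff_ball.1 (h3ev.and h4ev)
  set ρ' : ℝ := min ρ R with hρ'
  have hρ'pos : 0 < ρ' := lt_min hρpos hRpos
  set s : Set E := Metric.ball x₀ ρ' with hs
  have hconv : Convex ℝ s := convex_ball _ _
  have hsB : s ⊆ B := Metric.ball_subset_ball (min_le_right _ _)
  have hsρ : s ⊆ Metric.ball x₀ ρ := Metric.ball_subset_ball (min_le_left _ _)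
  have hM3 : ∀ z ∈ s, ‖A3 z‖ ≤ M :=
    fun z hz => le_trans (le_of_lt (hρ z (hsρ hz)).1) (le_max_left _ _)
  have hM4 : ∀ z ∈ s, ‖A4 z‖ ≤ M :=
    fun z hz => le_trans (le_of_lt (hρ z (hsρ hz)).2) (le_max_right _ _)
  have hx₀s : x₀ ∈ s := Metric.mem_ball_self hρ'pos
  -- Taylor estimates
  have taylf : ∀ p ∈ s, ∀ q ∈ s,
      ‖f q - f p - A p (q - p) - (2⁻¹:ℝ) • A2 p (q - p) (q - p)‖ ≤ M * ‖q - p‖ ^ 3 :=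
    fun p hp q hq => key2 hconv (fun z hz => hdf z (hsB hz)) (fun z hz => hdA z (hsB hz))
      (fun z hz => hdA2 z (hsB hz)) hM3 hp hq
  have taylA : ∀ p ∈ s, ∀ q ∈ s,
      ‖A q - A p - A2 p (q - p) - (2⁻¹:ℝ) • A3 p (q - p) (q - p)‖ ≤ M * ‖q - p‖ ^ 3 :=
    fun p hp q hq => key2 hconv (fun z hz => hdA z (hsB hz)) (fun z hz => hdA2 z (hsB hz))
      (fun z hz => hdA3 z (hsB hz)) hM4 hp hq
  have lipA2 : ∀ p ∈ s, ∀ q ∈ s, ‖A2 q - A2 p‖ ≤ M * ‖q - p‖ :=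
    fun p hp q hq => key0 hconv (fun z hz => hdA2 z (hsB hz)) hM3 hp hq
  -- radius
  set r : ℝ := min 1 (ρ' / (2 * (‖u‖ + ‖w‖ + 1))) with hr
  have hrpos : 0 < r := lt_min one_pos (div_pos hρ'pos (by positivity))
  have hr1 : r ≤ 1 := min_le_left _ _
  have hr2 : r ≤ ρ' / (2 * (‖u‖ + ‖w‖ + 1)) := min_le_right _ _
  set C : ℝ := 8*M*‖w‖^3 + (3/2)*M*‖u‖^3*‖w‖ + (3/2)*M*‖u‖*‖w‖^2 with hC
  rw [isBigO_iff]
  refine ⟨C, ?_⟩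
  filter_upwards [Metric.ball_mem_nhds (0:ℝ) hrpos] with ε hε
  rw [Metric.mem_ball, Real.dist_eq, sub_zero] at hε
  set t : ℝ := |ε| with ht
  have ht0 : 0 ≤ t := abs_nonneg ε
  have htr : t < r := hε
  have ht1 : t ≤ 1 := le_of_lt (lt_of_lt_of_le htr hr1)
  -- membership of the six points
  have hmem : ∀ a b : ℝ, |a| ≤ t → |b| ≤ t → x₀ + (a • u + b • w) ∈ s := by
    intro a b ha hb
    rw [hs, Metric.mem_ball, dist_eq_norm, add_sub_cancel_left]
    have e : ‖a • u + b • w‖ ≤ |a| * ‖u‖ + |b| * ‖w‖ := by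
      refine le_trans (norm_add_le _ _) ?_
      rw [norm_smul, norm_smul, Real.norm_eq_abs, Real.norm_eq_abs]
    exact lt_of_le_of_lt e (mem_arith ha hb ht0 htr hr2 (norm_nonneg u) (norm_nonneg w))
  have htsq : |ε ^ 2| ≤ t := by
    rw [abs_pow]
    exact pow_le_of_le_one ht0 ht1 (by norm_num)
  have habs2 : |ε / 2| ≤ t := by
    rw [abs_div, abs_two]
    exact half_le_self ht0
  have mem0 : x₀ ∈ s := hx₀s
  have mem0' : x₀ + ε ^ 2 • w ∈ s := by
    have := hmem 0 (ε ^ 2) (by simpa using ht0) htsq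
    simpa using this
  have mem1 : x₀ + (ε / 2) • u ∈ s := by
    have := hmem (ε / 2) 0 habs2 (by simpa using ht0)
    simpa [← add_assoc] using this
  have mem1' : x₀ + (ε / 2) • u + ε ^ 2 • w ∈ s := by
    have := hmem (ε / 2) (ε ^ 2) habs2 htsq
    simpa [← add_assoc] using this
  have mem2 : x₀ + ε • u ∈ s := by
    have := hmem ε 0 le_rfl (by simpa using ht0)
    simpa [← add_assoc] using this
  have mem2' : x₀ + ε • u + ε ^ 2 • w ∈ s := by
    have := hmem ε (ε ^ 2) le_rfl htsq
    simpa [← add_assoc] using this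
  -- the six stencil points, remainder vectors and their bounds
  have hiter : iteratedFDeriv ℝ 2 f x₀ ![u, w] = A2 x₀ u w := by
    rw [iteratedFDeriv_two_apply]
    simp only [Matrix.cons_val_zero, Matrix.cons_val_one, Matrix.head_cons, ← hA, ← hA2]
  have hnormsq : ‖(ε^2 • w : E)‖ = |ε|^2 * ‖w‖ := by
    rw [norm_smul, Real.norm_eq_abs, abs_pow]
  have hnormhalf : ‖((ε/2) • u : E)‖ = (|ε|/2) * ‖u‖ := by
    rw [norm_smul, Real.norm_eq_abs, abs_div, abs_two]
  have hnormeps : ‖(ε • u : E)‖ = |ε| * ‖u‖ := by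
    rw [norm_smul, Real.norm_eq_abs]
  -- R remainders
  set R0 : F := f (x₀ + ε^2 • w) - f x₀ - ε^2 • A x₀ w - (2⁻¹*ε^4) • A2 x₀ w w with hR0def
  set R1 : F := f (x₀ + (ε/2) • u + ε^2 • w) - f (x₀ + (ε/2) • u)
      - ε^2 • A (x₀ + (ε/2) • u) w - (2⁻¹*ε^4) • A2 (x₀ + (ε/2) • u) w w with hR1def
  set R2 : F := f (x₀ + ε • u + ε^2 • w) - f (x₀ + ε • u)
      - ε^2 • A (x₀ + ε • u) w - (2⁻¹*ε^4) • A2 (x₀ + ε • u) w w with hR2def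
  have hy0 : f (x₀ + ε^2 • w) - f x₀
      = ε^2 • A x₀ w + (2⁻¹*ε^4) • A2 x₀ w w + R0 := by rw [hR0def]; abel
  have hy1 : f (x₀ + (ε/2) • u + ε^2 • w) - f (x₀ + (ε/2) • u)
      = ε^2 • A (x₀ + (ε/2) • u) w + (2⁻¹*ε^4) • A2 (x₀ + (ε/2) • u) w w + R1 := by
    rw [hR1def]; abel
  have hy2 : f (x₀ + ε • u + ε^2 • w) - f (x₀ + ε • u)
      = ε^2 • A (x₀ + ε • u) w + (2⁻¹*ε^4) • A2 (x₀ + ε • u) w w + R2 := by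
    rw [hR2def]; abel
  have hR0n : ‖R0‖ ≤ M * (|ε|^2 * ‖w‖)^3 := by
    have h := taylf x₀ mem0 (x₀ + ε^2 • w) mem0'
    rw [add_sub_cancel_left] at h
    have hvec : f (x₀ + ε^2 • w) - f x₀ - A x₀ (ε^2 • w)
        - (2⁻¹:ℝ) • A2 x₀ (ε^2 • w) (ε^2 • w) = R0 := by
      rw [hR0def]
      simp only [map_smul, ContinuousLinearMap.smul_apply, smul_smul]
      module
    rw [hvec, hnormsq] at h
    exact h
  have hR1n : ‖R1‖ ≤ M * (|ε|^2 * ‖w‖)^3 := by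
    have h := taylf (x₀ + (ε/2) • u) mem1 (x₀ + (ε/2) • u + ε^2 • w) mem1'
    rw [add_sub_cancel_left] at h
    have hvec : f (x₀ + (ε/2) • u + ε^2 • w) - f (x₀ + (ε/2) • u)
        - A (x₀ + (ε/2) • u) (ε^2 • w)
        - (2⁻¹:ℝ) • A2 (x₀ + (ε/2) • u) (ε^2 • w) (ε^2 • w) = R1 := by
      rw [hR1def]
      simp only [map_smul, ContinuousLinearMap.smul_apply, smul_smul]
      module
    rw [hvec, hnormsq] at h
    exact h
  have hR2n : ‖R2‖ ≤ M * (|ε|^2 * ‖w‖)^3 := by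
    have h := taylf (x₀ + ε • u) mem2 (x₀ + ε • u + ε^2 • w) mem2'
    rw [add_sub_cancel_left] at h
    have hvec : f (x₀ + ε • u + ε^2 • w) - f (x₀ + ε • u)
        - A (x₀ + ε • u) (ε^2 • w)
        - (2⁻¹:ℝ) • A2 (x₀ + ε • u) (ε^2 • w) (ε^2 • w) = R2 := by
      rw [hR2def]
      simp only [map_smul, ContinuousLinearMap.smul_apply, smul_smul]
      module
    rw [hvec, hnormsq] at h
    exact h
  -- T terms
  set T1 : E →L[ℝ] F := A (x₀ + (ε/2) • u) - A x₀ - (ε/2) • A2 x₀ u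
      - (2⁻¹*(ε/2)^2) • A3 x₀ u u with hT1def
  set T2 : E →L[ℝ] F := A (x₀ + ε • u) - A x₀ - ε • A2 x₀ u
      - (2⁻¹*ε^2) • A3 x₀ u u with hT2def
  have ha1 : A (x₀ + (ε/2) • u) w
      = A x₀ w + (ε/2) • A2 x₀ u w + (2⁻¹*(ε/2)^2) • A3 x₀ u u w + T1 w := by
    rw [hT1def]
    simp only [ContinuousLinearMap.sub_apply, ContinuousLinearMap.smul_apply]
    abel
  have ha2 : A (x₀ + ε • u) w
      = A x₀ w + ε • A2 x₀ u w + (2⁻¹*ε^2) • A3 x₀ u u w + T2 w := by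
    rw [hT2def]
    simp only [ContinuousLinearMap.sub_apply, ContinuousLinearMap.smul_apply]
    abel
  have hT1n : ‖T1 w‖ ≤ M * ((|ε|/2) * ‖u‖)^3 * ‖w‖ := by
    have h := taylA x₀ mem0 (x₀ + (ε/2) • u) mem1
    rw [add_sub_cancel_left] at h
    have hvec : A (x₀ + (ε/2) • u) - A x₀ - A2 x₀ ((ε/2) • u)
        - (2⁻¹:ℝ) • A3 x₀ ((ε/2) • u) ((ε/2) • u) = T1 := by
      rw [hT1def]
      simp only [map_smul, ContinuousLinearMap.smul_apply, smul_smul]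
      module
    rw [hvec, hnormhalf] at h
    calc ‖T1 w‖ ≤ ‖T1‖ * ‖w‖ := T1.le_opNorm w
      _ ≤ M * ((|ε|/2) * ‖u‖)^3 * ‖w‖ := by
          exact mul_le_mul_of_nonneg_right h (norm_nonneg w)
  have hT2n : ‖T2 w‖ ≤ M * (|ε| * ‖u‖)^3 * ‖w‖ := by
    have h := taylA x₀ mem0 (x₀ + ε • u) mem2
    rw [add_sub_cancel_left] at h
    have hvec : A (x₀ + ε • u) - A x₀ - A2 x₀ (ε • u)
        - (2⁻¹:ℝ) • A3 x₀ (ε • u) (ε • u) = T2 := by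
      rw [hT2def]
      simp only [map_smul, ContinuousLinearMap.smul_apply, smul_smul]
      module
    rw [hvec, hnormeps] at h
    calc ‖T2 w‖ ≤ ‖T2‖ * ‖w‖ := T2.le_opNorm w
      _ ≤ M * (|ε| * ‖u‖)^3 * ‖w‖ := by
          exact mul_le_mul_of_nonneg_right h (norm_nonneg w)
  -- D terms
  set D1 := A2 (x₀ + (ε/2) • u) - A2 x₀ with hD1def
  set D2 := A2 (x₀ + ε • u) - A2 x₀ with hD2def
  have hb1 : A2 (x₀ + (ε/2) • u) w w = A2 x₀ w w + D1 w w := by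
    rw [hD1def]
    simp only [ContinuousLinearMap.sub_apply]
    abel
  have hb2 : A2 (x₀ + ε • u) w w = A2 x₀ w w + D2 w w := by
    rw [hD2def]
    simp only [ContinuousLinearMap.sub_apply]
    abel
  have hD1n : ‖D1 w w‖ ≤ M * ((|ε|/2) * ‖u‖) * ‖w‖^2 := by
    have h := lipA2 x₀ mem0 (x₀ + (ε/2) • u) mem1
    rw [add_sub_cancel_left, hnormhalf] at h
    rw [← hD1def] at h
    calc ‖D1 w w‖ ≤ ‖D1 w‖ * ‖w‖ := (D1 w).le_opNorm w
      _ ≤ (‖D1‖ * ‖w‖) * ‖w‖ :=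
          mul_le_mul_of_nonneg_right (D1.le_opNorm w) (norm_nonneg w)
      _ ≤ (M * ((|ε|/2) * ‖u‖) * ‖w‖) * ‖w‖ := by
          have := mul_le_mul_of_nonneg_right
            (mul_le_mul_of_nonneg_right h (norm_nonneg w)) (norm_nonneg w)
          exact this
      _ = M * ((|ε|/2) * ‖u‖) * ‖w‖^2 := by ring
  have hD2n : ‖D2 w w‖ ≤ M * (|ε| * ‖u‖) * ‖w‖^2 := by
    have h := lipA2 x₀ mem0 (x₀ + ε • u) mem2
    rw [add_sub_cancel_left, hnormeps] at h
    rw [← hD2def] at h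
    calc ‖D2 w w‖ ≤ ‖D2 w‖ * ‖w‖ := (D2 w).le_opNorm w
      _ ≤ (‖D2‖ * ‖w‖) * ‖w‖ :=
          mul_le_mul_of_nonneg_right (D2.le_opNorm w) (norm_nonneg w)
      _ ≤ (M * (|ε| * ‖u‖) * ‖w‖) * ‖w‖ := by
          have := mul_le_mul_of_nonneg_right
            (mul_le_mul_of_nonneg_right h (norm_nonneg w)) (norm_nonneg w)
          exact this
      _ = M * (|ε| * ‖u‖) * ‖w‖^2 := by ring
  -- conclude via the assembly lemma
  have goal_eq : ‖(fun ε : ℝ => ε ^ 5) ε‖ = |ε|^5 := by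
    rw [Real.norm_eq_abs, abs_pow]
  rw [goal_eq]
  try dsimp only
  rw [hiter]
  exact stencil_assembly ε M ‖u‖ ‖w‖ _ _ _ _ _ _ _ _ _ _ _ _ _ _ _ _ _ _ _ _ _
    hy0 hy1 hy2 ha1 ha2 hb1 hb2 hM0 (norm_nonneg u) (norm_nonneg w) ht1
    hR0n hR1n hR2n hT1n hT2n hD1n hD2n
end

section
/- Let f be C³ on a neighbourhood of x₀ and fix u, z ∈ E. Then the four-point mixed-derivative stencil applied to a first-order direction ε•u and a third-order direction ε³•z is fifth-order accurate: the function ε ↦ f(x₀ + ε•u + ε³•z) − f(x₀ + ε³•z) − f(x₀ + ε•u) + f(x₀) − ε⁴ • f″(x₀)[u,z] is O(ε⁵) as ε → 0. -/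
open Topology Asymptotics Filter

set_option maxHeartbeats 12000000

section Aux

variable {E G : Type*} [NormedAddCommGroup E] [NormedSpace ℝ E]
  [NormedAddCommGroup G] [NormedSpace ℝ G]

/-- Derivative of the "diagonal application" `h ↦ W h h`. -/
lemma hasFDerivAt_diag_app {W : E → (E →L[ℝ] G)} {W' : E →L[ℝ] E →L[ℝ] G} {h₀ : E}
    (hW : HasFDerivAt W W' h₀) :
    HasFDerivAt (fun h => W h h) (W'.flip h₀ + W h₀) h₀ := by
  have h2 := hW.clm_apply (hasFDerivAt_id h₀)
  simp only [id_eq] at h2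
  have heq : (W h₀).comp (ContinuousLinearMap.id ℝ E) + W'.flip h₀ = W'.flip h₀ + W h₀ := by
    rw [ContinuousLinearMap.comp_id]; exact add_comm _ _
  rw [heq] at h2
  exact h2

/-- Mean value inequality on the segment from `a` to `a + b`. -/
lemma mvt_seg {r : E → G} {ρ : E → E →L[ℝ] G} {δ M : ℝ} (a b : E)
    (hd : ∀ h : E, ‖h‖ < δ → HasFDerivAt r (ρ h) h)
    (hb : ∀ h : E, ‖h‖ ≤ ‖a‖ + ‖b‖ → ‖h‖ < δ → ‖ρ h‖ ≤ M)
    (hab : ‖a‖ + ‖b‖ < δ) :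
    ‖r (a + b) - r a‖ ≤ M * ‖b‖ := by
  have hseg : ∀ y ∈ segment ℝ a (a + b), ‖y‖ ≤ ‖a‖ + ‖b‖ := by
    intro y hy
    rw [segment_eq_image'] at hy
    obtain ⟨t, ht, rfl⟩ := hy
    have hb' : a + b - a = b := by abel
    rw [hb']
    calc ‖a + t • b‖ ≤ ‖a‖ + ‖t • b‖ := norm_add_le _ _
      _ ≤ ‖a‖ + ‖b‖ := by
          gcongr
          rw [norm_smul, Real.norm_eq_abs, abs_of_nonneg ht.1]
          exact mul_le_of_le_one_left (norm_nonneg b) ht.2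
  have key := Convex.norm_image_sub_le_of_norm_fderiv_le
    (f := r) (s := segment ℝ a (a + b)) (C := M)
    (fun y hy => (hd y (lt_of_le_of_lt (hseg y hy) hab)).differentiableAt)
    (fun y hy => by
      rw [(hd y (lt_of_le_of_lt (hseg y hy) hab)).fderiv]
      exact hb y (hseg y hy) (lt_of_le_of_lt (hseg y hy) hab))
    (convex_segment a (a + b)) (left_mem_segment ℝ a (a + b))
    (right_mem_segment ℝ a (a + b))
  simpa [add_sub_cancel_left] using key

/-- Second-order Taylor estimate at a point for a `C²` function. -/
lemma taylor2_aux (φ : E → G) (x₀ : E) (hφ : ContDiffAt ℝ 2 φ x₀) {c : ℝ} (hc : 0 < c) :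
    ∃ δ > 0, ∀ h : E, ‖h‖ < δ →
      ‖φ (x₀ + h) - φ x₀ - fderiv ℝ φ x₀ h
        - (2⁻¹ : ℝ) • fderiv ℝ (fderiv ℝ φ) x₀ h h‖ ≤ c * ‖h‖ ^ 2 := by
  obtain ⟨u, hu, hcd⟩ := hφ.contDiffOn (le_refl 2) (by simp)
  obtain ⟨U, hUu, hUo, hx₀U⟩ := mem_nhds_iff.1 hu
  have hsymm : ∀ v w, fderiv ℝ (fderiv ℝ φ) x₀ v w = fderiv ℝ (fderiv ℝ φ) x₀ w v :=
    hφ.isSymmSndFDerivAt (by norm_num)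
  have hdφ' : DifferentiableAt ℝ (fderiv ℝ φ) x₀ :=
    (hφ.fderiv_right (m := 1) (by norm_num)).differentiableAt (by norm_num)
  have hR : (fun h : E => fderiv ℝ φ (x₀ + h) - fderiv ℝ φ x₀
      - fderiv ℝ (fderiv ℝ φ) x₀ h) =o[𝓝 0] (fun h : E => h) :=
    hasFDerivAt_iff_isLittleO_nhds_zero.1 hdφ'.hasFDerivAt
  have hR' := isLittleO_iff.1 hR hc
  obtain ⟨δ₁, hδ₁, hball⟩ := Metric.eventually_nhds_iff.1 hR'
  obtain ⟨δ₂, hδ₂, hball2⟩ := Metric.isOpen_iff.1 hUo x₀ hx₀U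
  refine ⟨min δ₁ δ₂, by positivity, fun h hh => ?_⟩
  have hdiff : ∀ y : E, ‖y‖ < min δ₁ δ₂ →
      HasFDerivAt (fun w : E => φ (x₀ + w) - φ x₀ - fderiv ℝ φ x₀ w
          - (2⁻¹ : ℝ) • fderiv ℝ (fderiv ℝ φ) x₀ w w)
        (fderiv ℝ φ (x₀ + y) - fderiv ℝ φ x₀ - fderiv ℝ (fderiv ℝ φ) x₀ y) y := by
    intro y hy
    have hyU : x₀ + y ∈ U := by
      apply hball2
      rw [Metric.mem_ball, dist_eq_norm, add_sub_cancel_left]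
      exact lt_of_lt_of_le hy (min_le_right _ _)
    have hdy : DifferentiableAt ℝ φ (x₀ + y) :=
      (((hcd.mono hUu) (x₀ + y) hyU).contDiffAt (hUo.mem_nhds hyU)).differentiableAt
        two_ne_zero
    have h1 : HasFDerivAt (fun w : E => φ (x₀ + w)) (fderiv ℝ φ (x₀ + y)) y := by
      have hadd : HasFDerivAt (fun w : E => x₀ + w) (ContinuousLinearMap.id ℝ E) y :=
        (hasFDerivAt_id y).const_add x₀
      have h' := hdy.hasFDerivAt.comp y hadd
      rw [ContinuousLinearMap.comp_id] at h'
      exact h'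
    have h3 : HasFDerivAt (fun w : E => fderiv ℝ (fderiv ℝ φ) x₀ w w)
        ((fderiv ℝ (fderiv ℝ φ) x₀).flip y + fderiv ℝ (fderiv ℝ φ) x₀ y) y :=
      hasFDerivAt_diag_app (fderiv ℝ (fderiv ℝ φ) x₀).hasFDerivAt
    have hD := ((h1.sub_const (φ x₀)).sub (fderiv ℝ φ x₀).hasFDerivAt).sub
      (h3.const_smul (2⁻¹ : ℝ))
    have heq : fderiv ℝ φ (x₀ + y) - fderiv ℝ φ x₀ - fderiv ℝ (fderiv ℝ φ) x₀ y
        = fderiv ℝ φ (x₀ + y) - fderiv ℝ φ x₀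
          - (2⁻¹ : ℝ) • ((fderiv ℝ (fderiv ℝ φ) x₀).flip y + fderiv ℝ (fderiv ℝ φ) x₀ y) := by
      ext v
      simp only [ContinuousLinearMap.sub_apply, ContinuousLinearMap.smul_apply,
        ContinuousLinearMap.add_apply, ContinuousLinearMap.flip_apply, hsymm v y]
      module
    rw [heq]
    exact hD
  have hbound : ∀ y : E, ‖y‖ ≤ ‖(0 : E)‖ + ‖h‖ → ‖y‖ < min δ₁ δ₂ →
      ‖fderiv ℝ φ (x₀ + y) - fderiv ℝ φ x₀ - fderiv ℝ (fderiv ℝ φ) x₀ y‖ ≤ c * ‖h‖ := by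
    intro y hy1 hy2
    have hyδ₁ : dist y 0 < δ₁ := by
      rw [dist_zero_right]; exact lt_of_lt_of_le hy2 (min_le_left _ _)
    have h1 : ‖fderiv ℝ φ (x₀ + y) - fderiv ℝ φ x₀ - fderiv ℝ (fderiv ℝ φ) x₀ y‖ ≤ c * ‖y‖ := by
      simpa using hball hyδ₁
    refine h1.trans ?_
    have : ‖y‖ ≤ ‖h‖ := by simpa using hy1
    exact mul_le_mul_of_nonneg_left this hc.le
  have hmvt := mvt_seg (0 : E) h hdiff hbound (by simpa using hh)
  have h0 : φ (x₀ + (0 : E)) - φ x₀ - fderiv ℝ φ x₀ 0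
      - (2⁻¹ : ℝ) • fderiv ℝ (fderiv ℝ φ) x₀ 0 0 = 0 := by simp
  simp only [zero_add, h0, sub_zero] at hmvt
  exact le_of_le_of_eq hmvt (by ring)

end Aux


section Flip

variable {E F : Type*} [NormedAddCommGroup E] [NormedSpace ℝ E]
  [NormedAddCommGroup F] [NormedSpace ℝ F]

noncomputable def flipCLM : (E →L[ℝ] E →L[ℝ] F) →L[ℝ] (E →L[ℝ] E →L[ℝ] F) :=
  (ContinuousLinearMap.flipₗᵢ ℝ E E F).toLinearIsometry.toContinuousLinearMap

lemma flipCLM_apply (M : E →L[ℝ] E →L[ℝ] F) : flipCLM M = M.flip := rfl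

lemma third_deriv_symm12 (f : E → F) (x₀ : E) (hf : ContDiffAt ℝ 3 f x₀) :
    ∀ a v w : E, fderiv ℝ (fderiv ℝ (fderiv ℝ f)) x₀ a v w
      = fderiv ℝ (fderiv ℝ (fderiv ℝ f)) x₀ a w v := by
  have hg : ContDiffAt ℝ 2 (fderiv ℝ f) x₀ := hf.fderiv_right (by norm_num)
  obtain ⟨u3, hu3, hcd3⟩ := hf.contDiffOn (le_refl 3) (by simp)
  obtain ⟨U3, hU3u, hU3o, hx₀U3⟩ := mem_nhds_iff.1 hu3
  have hdΦ : DifferentiableAt ℝ (fderiv ℝ (fderiv ℝ f)) x₀ :=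
    (hg.fderiv_right (m := 1) (by norm_num)).differentiableAt (by norm_num)
  have hlin : HasFDerivAt (⇑(flipCLM (E := E) (F := F))) (flipCLM (E := E) (F := F))
      (fderiv ℝ (fderiv ℝ f) x₀) := (flipCLM (E := E) (F := F)).hasFDerivAt
  have hc : HasFDerivAt (⇑(flipCLM (E := E) (F := F)) ∘ (fderiv ℝ (fderiv ℝ f)))
      ((flipCLM (E := E) (F := F)).comp (fderiv ℝ (fderiv ℝ (fderiv ℝ f)) x₀)) x₀ :=
    HasFDerivAt.comp (𝕜 := ℝ) (E := E) (F := E →L[ℝ] E →L[ℝ] F) (G := E →L[ℝ] E →L[ℝ] F)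
      (f := fderiv ℝ (fderiv ℝ f)) (g := ⇑(flipCLM (E := E) (F := F))) x₀ hlin hdΦ.hasFDerivAt
  have e1 := hc.fderiv
  have hev : (⇑(flipCLM (E := E) (F := F)) ∘ (fderiv ℝ (fderiv ℝ f)))
      =ᶠ[𝓝 x₀] (fderiv ℝ (fderiv ℝ f)) := by
    filter_upwards [hU3o.mem_nhds hx₀U3] with y hy
    have hsy : ∀ v w : E, fderiv ℝ (fderiv ℝ f) y v w = fderiv ℝ (fderiv ℝ f) y w v :=
      (((hcd3.mono hU3u) y hy).contDiffAt (hU3o.mem_nhds hy)).isSymmSndFDerivAt (by norm_num)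
    show flipCLM (fderiv ℝ (fderiv ℝ f) y) = _
    rw [flipCLM_apply]
    ext v w
    rw [ContinuousLinearMap.flip_apply]
    exact hsy w v
  have e2 : fderiv ℝ (⇑(flipCLM (E := E) (F := F)) ∘ (fderiv ℝ (fderiv ℝ f))) x₀
      = fderiv ℝ (fderiv ℝ (fderiv ℝ f)) x₀ := hev.fderiv_eq
  intro a v w
  have h2 := e1.symm.trans e2
  have h3 : (fderiv ℝ (fderiv ℝ (fderiv ℝ f)) x₀ a).flip
      = fderiv ℝ (fderiv ℝ (fderiv ℝ f)) x₀ a := by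
    have h4 := ContinuousLinearMap.ext_iff.1 h2 a
    rw [ContinuousLinearMap.comp_apply, flipCLM_apply] at h4
    exact h4
  conv_rhs => rw [← h3]
  rw [ContinuousLinearMap.flip_apply]

lemma cubic_remainder_deriv (f : E → F) (x₀ : E)
    (B : E →L[ℝ] E →L[ℝ] F) (C : E →L[ℝ] E →L[ℝ] E →L[ℝ] F)
    (hsymB : ∀ v w : E, B v w = B w v)
    (hsym01 : ∀ v w : E, C v w = C w v)
    (hsym12 : ∀ a v w : E, C a v w = C a w v)
    (h : E) (hdy : DifferentiableAt ℝ f (x₀ + h)) :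
    HasFDerivAt (fun w : E => f (x₀ + w) - f x₀ - fderiv ℝ f x₀ w
        - (2⁻¹ : ℝ) • B w w - (6⁻¹ : ℝ) • C w w w)
      (fderiv ℝ f (x₀ + h) - fderiv ℝ f x₀ - B h - (2⁻¹ : ℝ) • C h h) h := by
  have h1 : HasFDerivAt (fun w : E => f (x₀ + w)) (fderiv ℝ f (x₀ + h)) h := by
    have hadd : HasFDerivAt (fun w : E => x₀ + w) (ContinuousLinearMap.id ℝ E) h :=
      (hasFDerivAt_id h).const_add x₀
    have h' := hdy.hasFDerivAt.comp h hadd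
    rw [ContinuousLinearMap.comp_id] at h'
    exact h'
  have hBd : HasFDerivAt (⇑B) B h :=
    B.hasFDerivAt (x := h)
  have hCd : HasFDerivAt (⇑C) C h :=
    C.hasFDerivAt (x := h)
  have h3 : HasFDerivAt (fun w : E => B w w) (B.flip h + B h) h :=
    hasFDerivAt_diag_app hBd
  have hW : HasFDerivAt (fun w : E => C w w) (C.flip h + C h) h :=
    hasFDerivAt_diag_app hCd
  have h4 : HasFDerivAt (fun w : E => C w w w) ((C.flip h + C h).flip h + C h h) h :=
    hasFDerivAt_diag_app hW
  have hD := (((h1.sub_const (f x₀)).sub (fderiv ℝ f x₀).hasFDerivAt).sub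
    (h3.const_smul (2⁻¹ : ℝ))).sub (h4.const_smul (6⁻¹ : ℝ))
  have heq : fderiv ℝ f (x₀ + h) - fderiv ℝ f x₀ - B h - (2⁻¹ : ℝ) • C h h
      = fderiv ℝ f (x₀ + h) - fderiv ℝ f x₀ - (2⁻¹ : ℝ) • (B.flip h + B h)
        - (6⁻¹ : ℝ) • ((C.flip h + C h).flip h + C h h) := by
    ext v
    simp only [ContinuousLinearMap.sub_apply, ContinuousLinearMap.smul_apply,
      ContinuousLinearMap.add_apply, ContinuousLinearMap.flip_apply]
    rw [hsymB v h, hsym01 v h, hsym12 h v h]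
    module
  rw [heq]
  exact hD

end Flip


section Assemble

variable {E F : Type*} [NormedAddCommGroup E] [NormedSpace ℝ E]
  [NormedAddCommGroup F] [NormedSpace ℝ F]

private lemma stencil_key (f : E → F) (x₀ u z : E) (r : E → F) (A : E →L[ℝ] F)
    (B : E →L[ℝ] E →L[ℝ] F) (C3 : E →L[ℝ] E →L[ℝ] E →L[ℝ] F) (c₁ c₂ : F)
    (hsymB : ∀ v w : E, B v w = B w v)
    (hr : ∀ h : E, r h = f (x₀ + h) - f x₀ - A h - (2⁻¹ : ℝ) • B h h - (6⁻¹ : ℝ) • C3 h h h)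
    (hc₁ : c₁ = (6⁻¹ : ℝ) • (C3 u u z + C3 u z u + C3 z u u))
    (hc₂ : c₂ = (6⁻¹ : ℝ) • (C3 u z z + C3 z u z + C3 z z u)) (ε : ℝ) :
    f (x₀ + ε • u + ε ^ 3 • z) - f (x₀ + ε ^ 3 • z) - f (x₀ + ε • u) + f x₀ - ε ^ 4 • B u z
      = (r (ε • u + ε ^ 3 • z) - r (ε • u)) - (r (ε ^ 3 • z) - r 0) + ε ^ 5 • c₁ + ε ^ 7 • c₂ := by
  rw [hr, hr, hr, hr, hc₁, hc₂]
  simp only [map_add, map_smul, map_zero, ContinuousLinearMap.add_apply,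
    ContinuousLinearMap.smul_apply, ContinuousLinearMap.zero_apply, smul_zero, add_zero,
    sub_zero, smul_smul, add_assoc, smul_add]
  rw [hsymB z u]
  module

private lemma bigO_T1 (r : E → F) (ρ : E → E →L[ℝ] F) (δ : ℝ) (hδpos : 0 < δ) (u z : E)
    (hr : ∀ h : E, ‖h‖ < δ → HasFDerivAt r (ρ h) h)
    (hρbound : ∀ h : E, ‖h‖ < δ → ‖ρ h‖ ≤ ‖h‖ ^ 2) :
    (fun ε : ℝ => r (ε • u + ε ^ 3 • z) - r (ε • u)) =O[𝓝 (0:ℝ)] fun ε : ℝ => ε ^ 5 := by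
  have hm : (0:ℝ) < min 1 (δ / (‖u‖ + ‖z‖ + 1)) := by positivity
  refine IsBigO.of_bound ((‖u‖ + ‖z‖) ^ 2 * ‖z‖) ?_
  filter_upwards [Metric.ball_mem_nhds (0:ℝ) hm] with ε hε
  rw [Metric.mem_ball, Real.dist_eq, sub_zero] at hε
  have hε1 : |ε| ≤ 1 := le_of_lt (lt_of_lt_of_le hε (min_le_left _ _))
  have hε2 : |ε| * (‖u‖ + ‖z‖ + 1) < δ := by
    have h' := lt_of_lt_of_le hε (min_le_right _ _)
    calc |ε| * (‖u‖ + ‖z‖ + 1) < (δ / (‖u‖ + ‖z‖ + 1)) * (‖u‖ + ‖z‖ + 1) := by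
          apply mul_lt_mul_of_pos_right h'; positivity
      _ = δ := by field_simp
  have hna : ‖ε • u‖ = |ε| * ‖u‖ := by rw [norm_smul, Real.norm_eq_abs]
  have hnb : ‖ε ^ 3 • z‖ = |ε| ^ 3 * ‖z‖ := by rw [norm_smul, Real.norm_eq_abs, abs_pow]
  have habs3 : |ε| ^ 3 ≤ |ε| := by
    calc |ε| ^ 3 ≤ |ε| ^ 1 := pow_le_pow_of_le_one (abs_nonneg ε) hε1 (by norm_num)
      _ = |ε| := pow_one _
  have hsum : ‖ε • u‖ + ‖ε ^ 3 • z‖ ≤ |ε| * (‖u‖ + ‖z‖) := by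
    rw [hna, hnb]
    nlinarith [mul_le_mul_of_nonneg_right habs3 (norm_nonneg z), abs_nonneg ε]
  have hsumδ : ‖ε • u‖ + ‖ε ^ 3 • z‖ < δ := by
    refine lt_of_le_of_lt hsum (lt_of_le_of_lt ?_ hε2)
    nlinarith [abs_nonneg ε]
  have hmain := mvt_seg (M := (|ε| * (‖u‖ + ‖z‖)) ^ 2) (ε • u) (ε ^ 3 • z) hr
    (fun y hy1 hy2 => le_trans (hρbound y hy2)
      (pow_le_pow_left₀ (norm_nonneg y) (le_trans hy1 hsum) 2))
    hsumδ
  calc ‖r (ε • u + ε ^ 3 • z) - r (ε • u)‖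
      ≤ (|ε| * (‖u‖ + ‖z‖)) ^ 2 * ‖ε ^ 3 • z‖ := hmain
    _ = (‖u‖ + ‖z‖) ^ 2 * ‖z‖ * ‖ε ^ 5‖ := by
        rw [hnb, Real.norm_eq_abs, abs_pow]; ring

private lemma bigO_T2 (r : E → F) (ρ : E → E →L[ℝ] F) (δ : ℝ) (hδpos : 0 < δ) (z : E)
    (hr : ∀ h : E, ‖h‖ < δ → HasFDerivAt r (ρ h) h)
    (hρbound : ∀ h : E, ‖h‖ < δ → ‖ρ h‖ ≤ ‖h‖ ^ 2) :
    (fun ε : ℝ => r (ε ^ 3 • z) - r 0) =O[𝓝 (0:ℝ)] fun ε : ℝ => ε ^ 5 := by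
  have hm : (0:ℝ) < min 1 (δ / (‖z‖ + 1)) := by positivity
  refine IsBigO.of_bound (‖z‖ ^ 3) ?_
  filter_upwards [Metric.ball_mem_nhds (0:ℝ) hm] with ε hε
  rw [Metric.mem_ball, Real.dist_eq, sub_zero] at hε
  have hε1 : |ε| ≤ 1 := le_of_lt (lt_of_lt_of_le hε (min_le_left _ _))
  have hε2 : |ε| * (‖z‖ + 1) < δ := by
    have h' := lt_of_lt_of_le hε (min_le_right _ _)
    calc |ε| * (‖z‖ + 1) < (δ / (‖z‖ + 1)) * (‖z‖ + 1) := by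
          apply mul_lt_mul_of_pos_right h'; positivity
      _ = δ := by field_simp
  have hnb : ‖ε ^ 3 • z‖ = |ε| ^ 3 * ‖z‖ := by rw [norm_smul, Real.norm_eq_abs, abs_pow]
  have habs3 : |ε| ^ 3 ≤ |ε| := by
    calc |ε| ^ 3 ≤ |ε| ^ 1 := pow_le_pow_of_le_one (abs_nonneg ε) hε1 (by norm_num)
      _ = |ε| := pow_one _
  have hbδ : ‖(0:E)‖ + ‖ε ^ 3 • z‖ < δ := by
    rw [norm_zero, zero_add, hnb]
    refine lt_of_le_of_lt ?_ hε2
    nlinarith [mul_le_mul_of_nonneg_right habs3 (norm_nonneg z), abs_nonneg ε, norm_nonneg z]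
  have hmain := mvt_seg (M := ‖ε ^ 3 • z‖ ^ 2) (0 : E) (ε ^ 3 • z) hr
    (fun y hy1 hy2 => le_trans (hρbound y hy2)
      (pow_le_pow_left₀ (norm_nonneg y) (by simpa using hy1) 2))
    hbδ
  rw [zero_add] at hmain
  calc ‖r (ε ^ 3 • z) - r 0‖ ≤ ‖ε ^ 3 • z‖ ^ 2 * ‖ε ^ 3 • z‖ := hmain
    _ = |ε| ^ 9 * ‖z‖ ^ 3 := by rw [hnb]; ring
    _ ≤ |ε| ^ 5 * ‖z‖ ^ 3 := by
        have h95 : |ε| ^ 9 ≤ |ε| ^ 5 :=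
          pow_le_pow_of_le_one (abs_nonneg ε) hε1 (by norm_num)
        nlinarith [pow_nonneg (norm_nonneg z) 3]
    _ = ‖z‖ ^ 3 * ‖ε ^ 5‖ := by rw [Real.norm_eq_abs, abs_pow]; ring

private lemma bigO_pow_smul (c : F) : (fun ε : ℝ => ε ^ 5 • c) =O[𝓝 (0:ℝ)] fun ε : ℝ => ε ^ 5 := by
  refine IsBigO.of_bound ‖c‖ (Filter.Eventually.of_forall fun ε => ?_)
  rw [norm_smul]
  exact le_of_eq (mul_comm _ _)

private lemma bigO_pow7_smul (c : F) :
    (fun ε : ℝ => ε ^ 7 • c) =O[𝓝 (0:ℝ)] fun ε : ℝ => ε ^ 5 := by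
  refine IsBigO.of_bound ‖c‖ ?_
  filter_upwards [Metric.ball_mem_nhds (0:ℝ) one_pos] with ε hε
  rw [Metric.mem_ball, Real.dist_eq, sub_zero] at hε
  rw [norm_smul, Real.norm_eq_abs, Real.norm_eq_abs, abs_pow, abs_pow]
  have h75 : |ε| ^ 7 ≤ |ε| ^ 5 := pow_le_pow_of_le_one (abs_nonneg ε) hε.le (by norm_num)
  nlinarith [norm_nonneg c]

end Assemble

/-- Four-point mixed-derivative stencil with a first-order direction `ε•u`
and a third-order direction `ε³•z`:
`f(x₀+ε•u+ε³•z) - f(x₀+ε³•z) - f(x₀+ε•u) + f(x₀) = ε⁴ • f″(x₀)[u,z] + O(ε⁵)`. -/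
theorem mixed_derivative_stencil_c1_c3
    {E F : Type*} [NormedAddCommGroup E] [NormedSpace ℝ E] [CompleteSpace E]
    [NormedAddCommGroup F] [NormedSpace ℝ F] [CompleteSpace F]
    (f : E → F) (x₀ u z : E)
    (hf : ContDiffAt ℝ 3 f x₀) :
    (fun ε : ℝ =>
        f (x₀ + ε • u + ε ^ 3 • z) - f (x₀ + ε ^ 3 • z) - f (x₀ + ε • u) + f x₀
          - ε ^ 4 • iteratedFDeriv ℝ 2 f x₀ ![u, z])
      =O[𝓝 (0 : ℝ)] fun ε => ε ^ 5 := by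
  have hg : ContDiffAt ℝ 2 (fderiv ℝ f) x₀ := hf.fderiv_right (by norm_num)
  obtain ⟨B, hBdef⟩ : ∃ B : E →L[ℝ] E →L[ℝ] F, B = fderiv ℝ (fderiv ℝ f) x₀ := ⟨_, rfl⟩
  obtain ⟨C3, hC3def⟩ : ∃ C3 : E →L[ℝ] E →L[ℝ] E →L[ℝ] F,
      C3 = fderiv ℝ (fderiv ℝ (fderiv ℝ f)) x₀ := ⟨_, rfl⟩
  have hsymB : ∀ v w : E, B v w = B w v := by
    rw [hBdef]; exact hf.isSymmSndFDerivAt (by norm_num)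
  have hsym01 : ∀ v w : E, C3 v w = C3 w v := by
    rw [hC3def]; exact hg.isSymmSndFDerivAt (by norm_num)
  have hsym12 : ∀ a v w : E, C3 a v w = C3 a w v := by
    rw [hC3def]; exact third_deriv_symm12 f x₀ hf
  obtain ⟨u3, hu3, hcd3⟩ := hf.contDiffOn (le_refl 3) (by simp)
  obtain ⟨U3, hU3u, hU3o, hx₀U3⟩ := mem_nhds_iff.1 hu3
  have hCD3 : ∀ y ∈ U3, ContDiffAt ℝ 3 f y := fun y hy =>
    ((hcd3.mono hU3u) y hy).contDiffAt (hU3o.mem_nhds hy)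
  obtain ⟨δ₁, hδ₁, htay⟩ := taylor2_aux (fderiv ℝ f) x₀ hg one_pos
  rw [← hBdef, ← hC3def] at htay
  obtain ⟨δ₂, hδ₂, hball3⟩ := Metric.isOpen_iff.1 hU3o x₀ hx₀U3
  obtain ⟨δ, hδdef⟩ : ∃ δ : ℝ, δ = min δ₁ δ₂ := ⟨_, rfl⟩
  have hδpos : 0 < δ := by rw [hδdef]; exact lt_min hδ₁ hδ₂
  have hδle1 : δ ≤ δ₁ := by rw [hδdef]; exact min_le_left _ _
  have hδle2 : δ ≤ δ₂ := by rw [hδdef]; exact min_le_right _ _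
  obtain ⟨r, hrdef⟩ : ∃ r : E → F, ∀ h : E, r h = f (x₀ + h) - f x₀ - fderiv ℝ f x₀ h
      - (2⁻¹ : ℝ) • B h h - (6⁻¹ : ℝ) • C3 h h h := ⟨_, fun _ => rfl⟩
  obtain ⟨ρ, hρdef⟩ : ∃ ρ : E → E →L[ℝ] F, ∀ h : E, ρ h = fderiv ℝ f (x₀ + h)
      - fderiv ℝ f x₀ - B h - (2⁻¹ : ℝ) • C3 h h := ⟨_, fun _ => rfl⟩
  have hρbound : ∀ h : E, ‖h‖ < δ → ‖ρ h‖ ≤ ‖h‖ ^ 2 := by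
    intro h hh
    have := htay h (lt_of_lt_of_le hh hδle1)
    rw [one_mul] at this
    rw [hρdef h]
    exact this
  have hr : ∀ h : E, ‖h‖ < δ → HasFDerivAt r (ρ h) h := by
    intro h hh
    have hyU : x₀ + h ∈ U3 := by
      apply hball3
      rw [Metric.mem_ball, dist_eq_norm, add_sub_cancel_left]
      exact lt_of_lt_of_le hh hδle2
    have hdy : DifferentiableAt ℝ f (x₀ + h) :=
      (hCD3 (x₀ + h) hyU).differentiableAt (by norm_num)
    have hkey := cubic_remainder_deriv f x₀ B C3 hsymB hsym01 hsym12 h hdy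
    rw [hρdef h]
    have hfun : (fun w : E => f (x₀ + w) - f x₀ - fderiv ℝ f x₀ w
        - (2⁻¹ : ℝ) • B w w - (6⁻¹ : ℝ) • C3 w w w) = r := by
      funext w; rw [hrdef w]
    rw [hfun] at hkey
    exact hkey
  obtain ⟨c₁, hc₁⟩ : ∃ c₁ : F, c₁ = (6⁻¹ : ℝ) • (C3 u u z + C3 u z u + C3 z u u) := ⟨_, rfl⟩
  obtain ⟨c₂, hc₂⟩ : ∃ c₂ : F, c₂ = (6⁻¹ : ℝ) • (C3 u z z + C3 z u z + C3 z z u) := ⟨_, rfl⟩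
  have hB2 : iteratedFDeriv ℝ 2 f x₀ ![u, z] = B u z := by
    rw [iteratedFDeriv_two_apply, hBdef]
    simp
  rw [show (fun ε : ℝ => f (x₀ + ε • u + ε ^ 3 • z) - f (x₀ + ε ^ 3 • z) - f (x₀ + ε • u) + f x₀
      - ε ^ 4 • iteratedFDeriv ℝ 2 f x₀ ![u, z])
      = fun ε : ℝ => (r (ε • u + ε ^ 3 • z) - r (ε • u)) - (r (ε ^ 3 • z) - r 0)
        + ε ^ 5 • c₁ + ε ^ 7 • c₂ from funext fun ε => by
          rw [hB2]
          exact stencil_key f x₀ u z r (fderiv ℝ f x₀) B C3 c₁ c₂ hsymB hrdef hc₁ hc₂ ε]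
  exact ((bigO_T1 r ρ δ hδpos u z hr hρbound).sub (bigO_T2 r ρ δ hδpos z hr hρbound)).add
    (bigO_pow_smul c₁) |>.add (bigO_pow7_smul c₂)
end
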